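/- Let d ≥ 2 and let ρ be a positive semidefinite complex matrix indexed by (Fin 3 → Fin d) with trace 1 (a tripartite density matrix with d-dimensional local systems). Define the diagonal outcome distribution p(x) = ρ(x, x) for x : Fin 3 → Fin d, with marginals p_A(i) = Σ_{x : x(0)=i} p(x), p_B(j) = Σ_{x : x(1)=j} p(x), p_C(k) = Σ_{x : x(2)=k} p(x). Suppose that for all i, j, k ∈ Fin d, p applied to the function (0↦i, 1↦j, 2↦k) is at most √(p_A(i)·p_B(j)·p_C(k)) (the Finner inequality). Let |GHZ_{3,d}⟩ ∈ ℂ^(Fin 3 → Fin d) be given by |GHZ_{3,d}⟩(x) = 1/√d if x is constant and 0 otherwise. Then ⟨GHZ_{3,d}| ρ |GHZ_{3,d}⟩ ≤ 1/√d. -/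

import Mathlib

open scoped BigOperators
open Matrix ComplexOrder

/-- The `N`-partite `d`-level GHZ state: amplitude `1/√d` on constant functions,
`0` elsewhere. -/
noncomputable def ghzVec (N d : ℕ) : (Fin N → Fin d) → ℂ :=
  fun x => if ∀ i j : Fin N, x i = x j then ((1 / Real.sqrt d : ℝ) : ℂ) else 0

private lemma sum_const_reindex {d : ℕ} (f : (Fin 3 → Fin d) → ℂ)
    (hf : ∀ x : Fin 3 → Fin d, ¬ (∀ i j : Fin 3, x i = x j) → f x = 0) :
    ∑ x : Fin 3 → Fin d, f x = ∑ i : Fin d, f (fun _ => i) := by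
  classical
  rw [← Finset.sum_image (f := f) (g := fun i : Fin d => (fun _ => i : Fin 3 → Fin d))
    (fun a _ b _ h => congrFun h 0)]
  symm
  apply Finset.sum_subset (Finset.subset_univ _)
  intro x _ hx
  apply hf
  intro hconst
  apply hx
  exact Finset.mem_image.mpr ⟨x 0, Finset.mem_univ _, funext fun j => hconst 0 j⟩

/-- a tripartite density matrix (with `d`-level parties, `d ≥ 2`) whose
computational-basis outcome distribution satisfies the Finner inequality has
`GHZ_{3,d}` fidelity at most `1/√d`. -/
theorem finner_ghz3d_fidelity_bound (d : ℕ) (hd : 2 ≤ d)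
    (ρ : Matrix (Fin 3 → Fin d) (Fin 3 → Fin d) ℂ)
    (hρ : ρ.PosSemidef) (htr : ρ.trace = 1)
    (hfinner : ∀ i j k : Fin d,
      (ρ ![i, j, k] ![i, j, k]).re ≤
        Real.sqrt
          ((∑ x : Fin 3 → Fin d, if x 0 = i then (ρ x x).re else 0) *
            (∑ x : Fin 3 → Fin d, if x 1 = j then (ρ x x).re else 0) *
            (∑ x : Fin 3 → Fin d, if x 2 = k then (ρ x x).re else 0))) :
    (star (ghzVec 3 d) ⬝ᵥ ρ *ᵥ ghzVec 3 d).re ≤ 1 / Real.sqrt d := by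
  classical
  have hd0 : (0:ℝ) < d := by positivity
  obtain ⟨B, hB⟩ : ∃ B : Matrix (Fin 3 → Fin d) (Fin 3 → Fin d) ℂ, ρ = Bᴴ * B := by
    open scoped MatrixOrder in
    exact ⟨CFC.sqrt ρ, by
      rw [show (CFC.sqrt ρ)ᴴ = CFC.sqrt ρ from (CFC.sqrt_nonneg ρ).isSelfAdjoint,
        CFC.sqrt_mul_sqrt_self ρ hρ.nonneg]⟩
  set c : Fin d → (Fin 3 → Fin d) := fun i _ => i with hc
  -- columns of B as Euclidean vectors
  set v : (Fin 3 → Fin d) → EuclideanSpace ℂ (Fin 3 → Fin d) := fun x => WithLp.toLp 2 (fun k => B k x) with hv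
  have hentry : ∀ x y, ρ x y = inner ℂ (v x) (v y) := by
    intro x y
    rw [hB]
    simp [Matrix.mul_apply, Matrix.conjTranspose_apply, PiLp.inner_apply, RCLike.inner_apply, v, mul_comm]
  have hdiag : ∀ x, (ρ x x).re = ‖v x‖ ^ 2 := by
    intro x
    rw [hentry, inner_self_eq_norm_sq_to_K, ← RCLike.ofReal_pow]
    exact Complex.ofReal_re _
  have hdiag0 : ∀ x, 0 ≤ (ρ x x).re := fun x => (hdiag x).symm ▸ sq_nonneg _
  -- marginals
  set a : Fin d → ℝ := fun i => ∑ x : Fin 3 → Fin d, if x 0 = i then (ρ x x).re else 0 with haa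
  set b : Fin d → ℝ := fun j => ∑ x : Fin 3 → Fin d, if x 1 = j then (ρ x x).re else 0 with hbb
  set e : Fin d → ℝ := fun k => ∑ x : Fin 3 → Fin d, if x 2 = k then (ρ x x).re else 0 with hee
  have hnonneg : ∀ (p : Fin d → ℝ), (p = a ∨ p = b ∨ p = e) → ∀ i, 0 ≤ p i := by
    rintro p (rfl | rfl | rfl) i <;>
      exact Finset.sum_nonneg fun x _ => by split <;> simp [hdiag0 x]
  have ha0 : ∀ i, 0 ≤ a i := hnonneg a (Or.inl rfl)
  have hb0 : ∀ i, 0 ≤ b i := hnonneg b (Or.inr (Or.inl rfl))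
  have he0 : ∀ i, 0 ≤ e i := hnonneg e (Or.inr (Or.inr rfl))
  have htrre : ∑ x : Fin 3 → Fin d, (ρ x x).re = 1 := by
    have h1 : (ρ.trace).re = 1 := by rw [htr]; simp
    rw [Matrix.trace] at h1
    simpa [Matrix.diag, Complex.re_sum] using h1
  have hmarg : ∀ (t : Fin 3) (p : Fin d → ℝ),
      (p = fun i => ∑ x : Fin 3 → Fin d, if x t = i then (ρ x x).re else 0) →
      ∑ i, p i = 1 := by
    rintro t p rfl
    rw [Finset.sum_comm]
    calc ∑ x : Fin 3 → Fin d, ∑ i : Fin d, (if x t = i then (ρ x x).re else 0)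
        = ∑ x : Fin 3 → Fin d, (ρ x x).re := by
          refine Finset.sum_congr rfl fun x _ => ?_
          simp [Finset.sum_ite_eq]
      _ = 1 := htrre
  have hsa : ∑ i, a i = 1 := hmarg 0 a rfl
  have hsb : ∑ i, b i = 1 := hmarg 1 b rfl
  have hse : ∑ i, e i = 1 := hmarg 2 e rfl
  -- the Finner bound on constant diagonal entries
  have hconst_eq : ∀ i : Fin d, (![i, i, i] : Fin 3 → Fin d) = c i := by
    intro i; funext k; fin_cases k <;> rfl
  set n : Fin d → ℝ := fun i => ‖v (c i)‖ with hn
  have hfin : ∀ i, n i ^ 2 ≤ Real.sqrt (a i * b i * e i) := by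
    intro i
    have := hfinner i i i
    rw [hconst_eq i, hdiag] at this
    exact this
  -- bound on ∑ n
  have hnle : ∀ i, n i ≤ Real.sqrt (Real.sqrt (a i * b i)) * Real.sqrt (Real.sqrt (e i)) := by
    intro i
    have h1 : n i ≤ Real.sqrt (Real.sqrt (a i * b i * e i)) := by
      rw [show n i = Real.sqrt (n i ^ 2) from (Real.sqrt_sq (norm_nonneg _)).symm]
      exact Real.sqrt_le_sqrt (hfin i)
    rwa [Real.sqrt_mul (mul_nonneg (ha0 i) (hb0 i)),
      Real.sqrt_mul (Real.sqrt_nonneg _)] at h1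
  have hsum_ab : ∑ i, Real.sqrt (a i * b i) ≤ 1 := by
    have hcs := Finset.sum_mul_sq_le_sq_mul_sq Finset.univ
      (fun i => Real.sqrt (a i)) (fun i => Real.sqrt (b i))
    simp only [Real.sq_sqrt (ha0 _), Real.sq_sqrt (hb0 _)] at hcs
    rw [hsa, hsb, one_mul] at hcs
    have heq : ∀ i : Fin d, Real.sqrt (a i * b i) = Real.sqrt (a i) * Real.sqrt (b i) :=
      fun i => Real.sqrt_mul (ha0 i) _
    calc ∑ i, Real.sqrt (a i * b i) = ∑ i, Real.sqrt (a i) * Real.sqrt (b i) := by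
          exact Finset.sum_congr rfl fun i _ => heq i
      _ = Real.sqrt ((∑ i, Real.sqrt (a i) * Real.sqrt (b i)) ^ 2) :=
          (Real.sqrt_sq (Finset.sum_nonneg fun i _ =>
            mul_nonneg (Real.sqrt_nonneg _) (Real.sqrt_nonneg _))).symm
      _ ≤ Real.sqrt 1 := Real.sqrt_le_sqrt hcs
      _ = 1 := Real.sqrt_one
  have hsum_e : ∑ i, Real.sqrt (e i) ≤ Real.sqrt d := by
    have hcs := Finset.sum_mul_sq_le_sq_mul_sq Finset.univ
      (fun _ : Fin d => (1:ℝ)) (fun i => Real.sqrt (e i))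
    simp only [one_mul, one_pow, Real.sq_sqrt (he0 _), Finset.sum_const,
      Finset.card_univ, Fintype.card_fin, nsmul_eq_mul, mul_one] at hcs
    rw [hse, mul_one] at hcs
    calc ∑ i, Real.sqrt (e i)
        = Real.sqrt ((∑ i, Real.sqrt (e i)) ^ 2) :=
          (Real.sqrt_sq (Finset.sum_nonneg fun i _ => Real.sqrt_nonneg _)).symm
      _ ≤ Real.sqrt d := Real.sqrt_le_sqrt hcs
  have hNsq : (∑ i, n i) ^ 2 ≤ Real.sqrt d := by
    have h1 : ∑ i, n i ≤ ∑ i, Real.sqrt (Real.sqrt (a i * b i)) * Real.sqrt (Real.sqrt (e i)) :=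
      Finset.sum_le_sum fun i _ => hnle i
    have hcs := Finset.sum_mul_sq_le_sq_mul_sq Finset.univ
      (fun i => Real.sqrt (Real.sqrt (a i * b i))) (fun i => Real.sqrt (Real.sqrt (e i)))
    simp only [Real.sq_sqrt (Real.sqrt_nonneg _)] at hcs
    calc (∑ i, n i) ^ 2
        ≤ (∑ i, Real.sqrt (Real.sqrt (a i * b i)) * Real.sqrt (Real.sqrt (e i))) ^ 2 := by
          apply pow_le_pow_left₀ (Finset.sum_nonneg fun i _ => norm_nonneg _) h1
      _ ≤ (∑ i, Real.sqrt (a i * b i)) * ∑ i, Real.sqrt (e i) := hcs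
      _ ≤ 1 * Real.sqrt d := by
          apply mul_le_mul hsum_ab hsum_e
            (Finset.sum_nonneg fun i _ => Real.sqrt_nonneg _) zero_le_one
      _ = Real.sqrt d := one_mul _
  -- compute the fidelity
  have hghz_const : ∀ i : Fin d, ghzVec 3 d (c i) = ((1 / Real.sqrt d : ℝ) : ℂ) := by
    intro i
    simp [ghzVec, c]
  have hghz_zero : ∀ x : Fin 3 → Fin d, ¬ (∀ i j : Fin 3, x i = x j) → ghzVec 3 d x = 0 := by
    intro x hx
    simp [ghzVec, hx]
  have hfid : star (ghzVec 3 d) ⬝ᵥ ρ *ᵥ ghzVec 3 d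
      = ((1 / Real.sqrt d : ℝ) : ℂ) ^ 2 * ∑ i, ∑ j, ρ (c i) (c j) := by
    rw [dotProduct]
    rw [sum_const_reindex _ (fun x hx => by
      simp [Pi.star_apply, hghz_zero x hx])]
    rw [Finset.mul_sum]
    refine Finset.sum_congr rfl fun i _ => ?_
    rw [show (fun _ => i : Fin 3 → Fin d) = c i from rfl]
    rw [Matrix.mulVec, dotProduct]
    rw [sum_const_reindex (fun y => ρ (c i) y * ghzVec 3 d y) (fun y hy => by
      simp [hghz_zero y hy])]
    rw [Pi.star_apply, hghz_const i, Finset.mul_sum, Finset.mul_sum]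
    refine Finset.sum_congr rfl fun j _ => ?_
    rw [show (fun _ => j : Fin 3 → Fin d) = c j from rfl, hghz_const j]
    rw [Complex.star_def, Complex.conj_ofReal]
    ring
  -- real part of the double sum
  have hSsum : ∑ i, ∑ j, ρ (c i) (c j)
      = (inner ℂ (∑ i, v (c i)) (∑ j, v (c j)) : ℂ) := by
    rw [sum_inner]
    refine Finset.sum_congr rfl fun i _ => ?_
    rw [inner_sum]
    exact Finset.sum_congr rfl fun j _ => hentry _ _
  have hSre : (∑ i, ∑ j, ρ (c i) (c j)).re ≤ (∑ i, n i) ^ 2 := by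
    rw [hSsum, inner_self_eq_norm_sq_to_K, ← RCLike.ofReal_pow]
    exact le_trans (le_of_eq (Complex.ofReal_re _))
      (pow_le_pow_left₀ (norm_nonneg _) (norm_sum_le _ _) 2)
  have hSre0 : 0 ≤ (∑ i, ∑ j, ρ (c i) (c j)).re := by
    rw [hSsum, inner_self_eq_norm_sq_to_K, ← RCLike.ofReal_pow]
    exact le_trans (sq_nonneg _) (le_of_eq (Complex.ofReal_re _).symm)
  -- put it together
  have hresq : ((1 / Real.sqrt d : ℝ) : ℂ) ^ 2 = (((1:ℝ) / d : ℝ) : ℂ) := by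
    rw [← Complex.ofReal_pow]
    norm_num [Real.sq_sqrt hd0.le]
  rw [hfid, hresq, Complex.re_ofReal_mul]
  have h1 : (1:ℝ) / d * (∑ i, ∑ j, ρ (c i) (c j)).re ≤ (1:ℝ) / d * Real.sqrt d := by
    apply mul_le_mul_of_nonneg_left (le_trans hSre hNsq) (by positivity)
  calc (1:ℝ) / d * (∑ i, ∑ j, ρ (c i) (c j)).re
      ≤ (1:ℝ) / d * Real.sqrt d := h1
    _ = Real.sqrt d / d := by ring
    _ = 1 / Real.sqrt d := by
        rw [div_eq_div_iff hd0.ne' (Real.sqrt_pos.mpr hd0).ne', one_mul]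
        exact Real.mul_self_sqrt hd0.le
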